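/- Let R be a commutative ring of characteristic p, e ≥ 1, and let B, C be square Witt-vector matrices over W(R) with C₀^(p^{e-1}) ⋯ C₀ = 0, and write F^{e-1}(C) ⋯ C = V(C'). Let A, Y be b×c matrices over W(R) satisfying V(Y) = F^{e+2}(B)·Y·F^{e+2}(C) + F(A). If X is a b×c matrix over W(R) satisfying V(X) = F^{e+1}(B)·X·F^{e+1}(C) + A and F(X) = Y, then V^e(X) = F^2(B) ⋯ F^{e+1}(B) · V(Y) · F(C') + Σ_{i=0}^{e-1} F^2(B) ⋯ F^{e-i}(B) · V^i(A) · F^{e-i}(C) ⋯ F^2(C). -/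
import Mathlib

/-- The Witt vector Frobenius as a plain function. -/
noncomputable def Fr (p : ℕ) [Fact p.Prime] {R : Type} [CommRing R] :
    WittVector p R → WittVector p R :=
  ⇑(WittVector.frobenius : WittVector p R →+* WittVector p R)

/-- The Witt vector Verschiebung as a plain function. -/
noncomputable def Ve (p : ℕ) [Fact p.Prime] {R : Type} [CommRing R] :
    WittVector p R → WittVector p R :=
  ⇑(WittVector.verschiebung : WittVector p R →+ WittVector p R)

section Aux

variable {p : ℕ} [Fact p.Prime] {R : Type} [CommRing R]

open WittVector

local notation "W" => WittVector p R

lemma ve_fr_mul (x y : W) : Ve p (Fr p x * y) = x * Ve p y := by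
  show verschiebung (frobenius x * y) = x * verschiebung y
  rw [mul_comm, WittVector.verschiebung_mul_frobenius, mul_comm]

lemma ve_mul_fr (x y : W) : Ve p (x * Fr p y) = Ve p x * y :=
  WittVector.verschiebung_mul_frobenius x y

lemma ve_sum {ι : Type} (s : Finset ι) (f : ι → W) :
    Ve p (∑ k ∈ s, f k) = ∑ k ∈ s, Ve p (f k) :=
  map_sum (WittVector.verschiebung : W →+ W) f s

lemma mapV_add {m n : Type} (M N : Matrix m n W) :
    (M + N).map (Ve p) = M.map (Ve p) + N.map (Ve p) := by
  refine Matrix.ext fun i j => ?_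
  simp [Matrix.map_apply, Ve]

lemma mapV_sum {m n ι : Type} (s : Finset ι) (f : ι → Matrix m n W) :
    (∑ i ∈ s, f i).map (Ve p) = ∑ i ∈ s, (f i).map (Ve p) := by
  refine Matrix.ext fun i j => ?_
  simp [Matrix.map_apply, Matrix.sum_apply, Ve]

lemma mapF_mul {m n o : Type} [Fintype n] (M : Matrix m n W) (N : Matrix n o W) :
    (M * N).map (Fr p) = M.map (Fr p) * N.map (Fr p) :=
  Matrix.map_mul

lemma mapV_mul_left {m n o : Type} [Fintype n] (M : Matrix m n W) (N : Matrix n o W) :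
    ((M.map (Fr p)) * N).map (Ve p) = M * N.map (Ve p) := by
  refine Matrix.ext fun i j => ?_
  simp only [Matrix.map_apply, Matrix.mul_apply]
  rw [ve_sum]
  exact Finset.sum_congr rfl fun k _ => ve_fr_mul _ _

lemma mapV_mul_right {m n o : Type} [Fintype n] (M : Matrix m n W) (N : Matrix n o W) :
    (M * (N.map (Fr p))).map (Ve p) = M.map (Ve p) * N := by
  refine Matrix.ext fun i j => ?_
  simp only [Matrix.map_apply, Matrix.mul_apply]
  rw [ve_sum]
  exact Finset.sum_congr rfl fun k _ => ve_mul_fr _ _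

lemma mapV_three {a b : ℕ} (M : Matrix (Fin a) (Fin a) W) (X : Matrix (Fin a) (Fin b) W)
    (N : Matrix (Fin b) (Fin b) W) :
    ((M.map (Fr p)) * X * (N.map (Fr p))).map (Ve p) = M * X.map (Ve p) * N := by
  rw [mapV_mul_right, mapV_mul_left]

lemma mapVF_comm [CharP R p] {m n : Type} (M : Matrix m n W) :
    (M.map (Ve p)).map (Fr p) = (M.map (Fr p)).map (Ve p) := by
  refine Matrix.ext fun i j => ?_
  exact (WittVector.verschiebung_frobenius_comm (M i j)).symm

lemma map_iter_congr {m n : Type} (M : Matrix m n W) {a b : ℕ} (h : a = b) :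
    M.map ((Fr p)^[a]) = M.map ((Fr p)^[b]) := by rw [h]

lemma ofFn_prod_congr {α : Type} [Monoid α] {k : ℕ} {f g : Fin k → α} (h : ∀ j, f j = g j) :
    (List.ofFn f).prod = (List.ofFn g).prod := by
  exact congrArg List.prod (congrArg List.ofFn (funext h))

lemma mapF_one {c : ℕ} : (1 : Matrix (Fin c) (Fin c) W).map (Fr p) = 1 := by
  refine Matrix.map_one (Fr p) ?_ ?_
  · show WittVector.frobenius (0 : W) = 0; exact map_zero _
  · show WittVector.frobenius (1 : W) = 1; exact map_one _

lemma mapF_iter {m n : Type} (M : Matrix m n W) (k : ℕ) :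
    (M.map ((Fr p)^[k])).map (Fr p) = M.map ((Fr p)^[k + 1]) := by
  rw [Matrix.map_map]
  exact congrArg (fun g => M.map g) (Function.iterate_succ' (Fr p) k).symm

lemma mapV_iter {m n : Type} (M : Matrix m n W) (k : ℕ) :
    (M.map ((Ve p)^[k])).map (Ve p) = M.map ((Ve p)^[k + 1]) := by
  rw [Matrix.map_map]
  exact congrArg (fun g => M.map g) (Function.iterate_succ' (Ve p) k).symm

variable {b c : ℕ}

/-- Partial product `F^m(B) F^{m+1}(B) ⋯ F^{m+k-1}(B)`. -/
noncomputable def Pb (B : Matrix (Fin b) (Fin b) W) : ℕ → ℕ → Matrix (Fin b) (Fin b) W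
  | _, 0 => 1
  | m, k + 1 => B.map ((Fr p)^[m]) * Pb B (m + 1) k

/-- Partial product `F^{m+k-1}(C) ⋯ F^{m+1}(C) F^m(C)`. -/
noncomputable def Pc (C : Matrix (Fin c) (Fin c) W) : ℕ → ℕ → Matrix (Fin c) (Fin c) W
  | _, 0 => 1
  | m, k + 1 => C.map ((Fr p)^[m + k]) * Pc C m k

lemma Pb_succ' (B : Matrix (Fin b) (Fin b) W) (m k : ℕ) :
    Pb B m (k + 1) = Pb B m k * B.map ((Fr p)^[m + k]) := by
  induction k generalizing m with
  | zero => simp [Pb]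
  | succ k ih =>
      rw [show Pb B m (k + 1 + 1) = B.map ((Fr p)^[m]) * Pb B (m + 1) (k + 1) from rfl,
        ih (m + 1), show Pb B m (k + 1) = B.map ((Fr p)^[m]) * Pb B (m + 1) k from rfl,
        mul_assoc]
      exact congrArg (HMul.hMul (B.map ((Fr p)^[m])))
        (congrArg (HMul.hMul (Pb B (m + 1) k)) (map_iter_congr B (by omega)))

lemma Pc_succ_high (C : Matrix (Fin c) (Fin c) W) (m k : ℕ) :
    Pc C m (k + 1) = Pc C (m + 1) k * C.map ((Fr p)^[m]) := by
  induction k generalizing m with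
  | zero => simp [Pc]
  | succ k ih =>
      rw [show Pc C m (k + 1 + 1) = C.map ((Fr p)^[m + (k + 1)]) * Pc C m (k + 1) from rfl,
        ih m, show Pc C (m + 1) (k + 1) = C.map ((Fr p)^[m + 1 + k]) * Pc C (m + 1) k from rfl,
        mul_assoc]
      exact congrArg (fun z => z * (Pc C (m + 1) k * C.map ((Fr p)^[m])))
        (map_iter_congr C (show m + (k + 1) = m + 1 + k by omega))

lemma Pb_map (B : Matrix (Fin b) (Fin b) W) (m k : ℕ) :
    Pb B (m + 1) k = (Pb B m k).map (Fr p) := by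
  induction k generalizing m with
  | zero => exact mapF_one.symm
  | succ k ih =>
      rw [show Pb B (m + 1) (k + 1) = B.map ((Fr p)^[m + 1]) * Pb B (m + 2) k from rfl,
        show Pb B m (k + 1) = B.map ((Fr p)^[m]) * Pb B (m + 1) k from rfl,
        mapF_mul, mapF_iter, ih (m + 1)]

lemma Pc_map (C : Matrix (Fin c) (Fin c) W) (m k : ℕ) :
    Pc C (m + 1) k = (Pc C m k).map (Fr p) := by
  induction k generalizing m with
  | zero => exact mapF_one.symm
  | succ k ih =>
      rw [show Pc C (m + 1) (k + 1) = C.map ((Fr p)^[m + 1 + k]) * Pc C (m + 1) k from rfl,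
        show Pc C m (k + 1) = C.map ((Fr p)^[m + k]) * Pc C m k from rfl,
        mapF_mul, mapF_iter, ih m]
      exact congrArg (fun z => z * (Pc C m k).map (Fr p))
        (map_iter_congr C (show m + 1 + k = m + k + 1 by omega))

lemma Pb_list (B : Matrix (Fin b) (Fin b) W) (m k : ℕ) :
    Pb B m k = (List.ofFn fun i : Fin k => B.map ((Fr p)^[m + (i : ℕ)])).prod := by
  induction k generalizing m with
  | zero => simp [Pb]
  | succ k ih =>
      rw [List.ofFn_succ, List.prod_cons,
        show Pb B m (k + 1) = B.map ((Fr p)^[m]) * Pb B (m + 1) k from rfl, ih (m + 1)]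
      refine congrArg₂ (· * ·) (map_iter_congr B (by simp)) (ofFn_prod_congr fun j => ?_)
      exact map_iter_congr B (by simp only [Fin.val_succ]; omega)

lemma Pc_list (C : Matrix (Fin c) (Fin c) W) (m k : ℕ) :
    Pc C m k = (List.ofFn fun j : Fin k => C.map ((Fr p)^[m + k - 1 - (j : ℕ)])).prod := by
  induction k generalizing m with
  | zero => simp [Pc]
  | succ k ih =>
      rw [List.ofFn_succ, List.prod_cons,
        show Pc C m (k + 1) = C.map ((Fr p)^[m + k]) * Pc C m k from rfl, ih m]
      refine congrArg₂ (· * ·) (map_iter_congr C (by simp)) (ofFn_prod_congr fun j => ?_)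
      exact map_iter_congr C (by simp only [Fin.val_succ]; omega)

lemma main_induction [CharP R p] (e : ℕ)
    (B : Matrix (Fin b) (Fin b) W) (C : Matrix (Fin c) (Fin c) W)
    (A X : Matrix (Fin b) (Fin c) W)
    (hX : X.map (Ve p) =
      B.map ((Fr p)^[e + 1]) * X * C.map ((Fr p)^[e + 1]) + A)
    (k : ℕ) (hk : k ≤ e) :
    X.map ((Ve p)^[k]) = Pb B (e + 2 - k) k * X * Pc C (e + 2 - k) k +
      ∑ i ∈ Finset.range k,
        Pb B (e + 2 - k) (k - 1 - i) * A.map ((Ve p)^[i]) * Pc C (e + 2 - k) (k - 1 - i) := by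
  induction k with
  | zero =>
      simp [Pb, Pc, Matrix.map_id]
  | succ k ih =>
      have hke : k ≤ e := Nat.le_of_succ_le hk
      have hm : e + 2 - k = (e + 1 - k) + 1 := by omega
      set m := e + 1 - k with hmdef
      have hmk : m + k = e + 1 := by omega
      have hstep : X.map ((Ve p)^[k + 1]) = (X.map ((Ve p)^[k])).map (Ve p) :=
        (mapV_iter X k).symm
      have hm2 : e + 2 - (k + 1) = m := by omega
      rw [hstep, ih hke, mapV_add, hm, hm2]
      have h1 : (Pb B (m + 1) k * X * Pc C (m + 1) k).map (Ve p) =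
          Pb B m k * X.map (Ve p) * Pc C m k := by
        rw [Pb_map, Pc_map]
        exact mapV_three _ _ _
      rw [h1, hX]
      have h2 : Pb B m k * (B.map ((Fr p)^[e + 1]) * X * C.map ((Fr p)^[e + 1]) + A) * Pc C m k
          = Pb B m (k + 1) * X * Pc C m (k + 1) + Pb B m k * A * Pc C m k := by
        rw [Pb_succ', show Pc C m (k + 1) = C.map ((Fr p)^[m + k]) * Pc C m k from rfl, hmk]
        simp only [Matrix.mul_add, Matrix.add_mul, Matrix.mul_assoc]
      rw [h2]
      have h3 : (∑ i ∈ Finset.range k,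
            Pb B (m + 1) (k - 1 - i) * A.map ((Ve p)^[i]) * Pc C (m + 1) (k - 1 - i)).map (Ve p)
          = ∑ i ∈ Finset.range k,
            Pb B m (k - 1 - i) * A.map ((Ve p)^[i + 1]) * Pc C m (k - 1 - i) := by
        rw [mapV_sum]
        refine Finset.sum_congr rfl fun i _ => ?_
        rw [Pb_map, Pc_map, mapV_three, mapV_iter]
      rw [h3]
      have h4 : ∑ i ∈ Finset.range (k + 1),
            Pb B m (k + 1 - 1 - i) * A.map ((Ve p)^[i]) * Pc C m (k + 1 - 1 - i)
          = (∑ i ∈ Finset.range k,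
              Pb B m (k - 1 - i) * A.map ((Ve p)^[i + 1]) * Pc C m (k - 1 - i))
            + Pb B m k * A * Pc C m k := by
        have e1 : ∀ i : ℕ, k + 1 - 1 - (i + 1) = k - 1 - i := fun i => by omega
        have e2 : k + 1 - 1 - 0 = k := by omega
        rw [Finset.sum_range_succ']
        simp only [e1, e2, Function.iterate_zero, Matrix.map_id]
      rw [h4]
      abel

end Aux

set_option maxHeartbeats 1600000 in
theorem statement_10 (p : ℕ) [Fact p.Prime] (R : Type) [CommRing R] [CharP R p]
    (b c e : ℕ) (he : 0 < e)
    (B : Matrix (Fin b) (Fin b) (WittVector p R))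
    (C C' : Matrix (Fin c) (Fin c) (WittVector p R))
    (A Y X : Matrix (Fin b) (Fin c) (WittVector p R))
    (hC0 : (List.ofFn fun i : Fin e =>
        C.map fun x => (x.coeff 0) ^ p ^ (e - 1 - (i : ℕ))).prod = 0)
    (hC' : (List.ofFn fun i : Fin e => C.map ((Fr p)^[e - 1 - (i : ℕ)])).prod = C'.map (Ve p))
    (hY : Y.map (Ve p) =
      B.map ((Fr p)^[e + 2]) * Y * C.map ((Fr p)^[e + 2]) + A.map (Fr p))
    (hX : X.map (Ve p) =
      B.map ((Fr p)^[e + 1]) * X * C.map ((Fr p)^[e + 1]) + A)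
    (hFX : X.map (Fr p) = Y) :
    X.map ((Ve p)^[e]) =
      (List.ofFn fun i : Fin e => B.map ((Fr p)^[(i : ℕ) + 2])).prod *
          (Y.map (Ve p)) * (C'.map (Fr p)) +
        ∑ i ∈ Finset.range e,
          (List.ofFn fun j : Fin (e - 1 - i) => B.map ((Fr p)^[(j : ℕ) + 2])).prod *
            (A.map ((Ve p)^[i])) *
            (List.ofFn fun j : Fin (e - 1 - i) => C.map ((Fr p)^[e - i - (j : ℕ)])).prod := by
  have key := main_induction e B C A X hX e le_rfl
  have he2 : e + 2 - e = 2 := by omega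
  rw [he2] at key
  rw [key]
  have hPbList : ∀ k : ℕ, (List.ofFn fun j : Fin k => B.map ((Fr p)^[(j : ℕ) + 2])).prod
      = Pb B 2 k := by
    intro k
    rw [Pb_list]
    exact ofFn_prod_congr fun j => map_iter_congr B (by omega)
  have hPcList : ∀ i : ℕ, i < e →
      (List.ofFn fun j : Fin (e - 1 - i) => C.map ((Fr p)^[e - i - (j : ℕ)])).prod
      = Pc C 2 (e - 1 - i) := by
    intro i hi
    rw [Pc_list]
    exact ofFn_prod_congr fun j => map_iter_congr C (by omega)
  have hPc0 : Pc C 0 e = C'.map (Ve p) := by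
    rw [← hC', Pc_list]
    exact ofFn_prod_congr fun j => map_iter_congr C (by omega)
  have hPc1e : Pc C 1 e = (Pc C 0 e).map (Fr p) := by
    have h := Pc_map C 0 e; norm_num at h; exact h
  have hPc2e : Pc C 2 e = (Pc C 1 e).map (Fr p) := by
    have h := Pc_map C 1 e; norm_num at h; exact h
  have hPb3e : Pb B 3 e = (Pb B 2 e).map (Fr p) := by
    have h := Pb_map B 2 e; norm_num at h; exact h
  have hPc2 : Pc C 2 e = ((C'.map (Fr p)).map (Fr p)).map (Ve p) := by
    rw [hPc2e, hPc1e, hPc0, mapVF_comm, mapVF_comm]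
  set D := (C'.map (Fr p)).map (Fr p) with hD
  have hmain : Pb B 2 e * X * Pc C 2 e =
      (List.ofFn fun i : Fin e => B.map ((Fr p)^[(i : ℕ) + 2])).prod *
        (Y.map (Ve p)) * (C'.map (Fr p)) := by
    rw [hPbList e, hPc2]
    have lhs1 : Pb B 2 e * X * (D.map (Ve p)) = ((Pb B 3 e) * (Y * D)).map (Ve p) := by
      rw [Matrix.mul_assoc, ← mapV_mul_left X D, hFX, hPb3e, mapV_mul_left]
    have rhs1 : Pb B 2 e * (Y.map (Ve p)) * (C'.map (Fr p))
        = ((Pb B 3 e) * (Y * D)).map (Ve p) := by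
      rw [← mapV_mul_left (Pb B 2 e) Y, ← hPb3e,
        ← mapV_mul_right (Pb B 3 e * Y) (C'.map (Fr p)), ← hD, Matrix.mul_assoc]
    rw [lhs1, rhs1]
  rw [hmain]
  congr 1
  refine Finset.sum_congr rfl fun i hi => ?_
  rw [hPbList, hPcList i (Finset.mem_range.mp hi)]
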